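/- Let b be a connected locally finite graph over (X,m) with sup_x Deg(x) < ∞, let S > 0, and define ρ_S(x,y) := sup{ρ(x,y) : ρ is an intrinsic pseudo-metric with jump size at most S}. Then √2 · ρ_S(x,y) ≤ ρ_ℰ(x,y) for all x, y ∈ X. -/

import Mathlib

set_option maxHeartbeats 1000000

noncomputable section

/-- A pseudo-metric on the vertex set. -/
def IsPseudoMetric {X : Type*} (ρ : X → X → ℝ) : Prop :=
  (∀ x, ρ x x = 0) ∧ (∀ x y, 0 ≤ ρ x y) ∧ (∀ x y, ρ x y = ρ y x) ∧
    ∀ x y z, ρ x z ≤ ρ x y + ρ y z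

/-- A pseudo-metric `ρ` is intrinsic if `Σ_y b(x,y) ρ(x,y)² ≤ m(x)` for all `x`. -/
def IsIntrinsic {X : Type*} (b : X → X → ℝ) (m : X → ℝ) (ρ : X → X → ℝ) : Prop :=
  ∀ x, ∑' y, b x y * ρ x y ^ 2 ≤ m x

/-- The jump size of `ρ` is at most `S`. -/
def JumpLE {X : Type*} (b : X → X → ℝ) (ρ : X → X → ℝ) (S : ℝ) : Prop :=
  ∀ x y, 0 < b x y → ρ x y ≤ S

/-- The energy density `Γ(f)(x) = (1/(2m(x))) Σ_y b(x,y)(f(x) − f(y))²`. -/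
def gammaDensity {X : Type*} (b : X → X → ℝ) (m : X → ℝ) (f : X → ℝ) (x : X) : ℝ :=
  (2 * m x)⁻¹ * ∑' y, b x y * (f x - f y) ^ 2

/-- `ρ_ℰ(x,y) = sup{|ψ(x) − ψ(y)| : ψ finitely supported, ‖Γ(ψ)‖_∞ ≤ 1}`. -/
def rhoE {X : Type*} (b : X → X → ℝ) (m : X → ℝ) (x y : X) : ℝ :=
  sSup {r | ∃ ψ : X → ℝ, (Function.support ψ).Finite ∧ (∀ z, gammaDensity b m ψ z ≤ 1) ∧
    r = |ψ x - ψ y|}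

/-- The (weighted) degree `deg(x) = Σ_y b(x,y)` of a vertex. -/
def graphDeg {X : Type*} (b : X → X → ℝ) (x : X) : ℝ := ∑' y, b x y

/-- `ρ_S(x,y)`: supremum of `ρ(x,y)` over all intrinsic pseudo-metrics with jump size at most
`S`. -/
def rhoS {X : Type*} (b : X → X → ℝ) (m : X → ℝ) (S : ℝ) (x y : X) : ℝ :=
  sSup {r | ∃ ρ : X → X → ℝ, IsPseudoMetric ρ ∧ IsIntrinsic b m ρ ∧ JumpLE b ρ S ∧ r = ρ x y}

/-! ### Auxiliary lemmas -/

lemma mySummable {X : Type*} {f g : X → ℝ} (h : (Function.support g).Finite)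
    (hfg : Function.support f ⊆ Function.support g) : Summable f := by
  refine summable_of_ne_finset_zero (s := h.toFinset) ?_
  intro x hx
  by_contra h0
  exact hx (h.mem_toFinset.mpr (hfg h0))

lemma finiteBall {X : Type*} (G : SimpleGraph X) (hlf : ∀ v, (G.neighborSet v).Finite)
    (hpre : G.Preconnected) (x : X) : ∀ n : ℕ, {z | G.dist x z ≤ n}.Finite := by
  intro n
  induction n with
  | zero =>
    refine Set.Finite.subset (Set.finite_singleton x) ?_
    intro z hz
    simp only [Set.mem_setOf_eq, Nat.le_zero] at hz
    exact ((hpre x z).dist_eq_zero_iff.mp hz).symm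
  | succ n ih =>
    refine Set.Finite.subset (ih.union (Set.Finite.biUnion ih (fun w _ => hlf w))) ?_
    intro z hz
    simp only [Set.mem_setOf_eq] at hz
    rcases Nat.lt_or_ge (G.dist x z) (n+1) with h | h
    · exact Or.inl (Nat.lt_succ_iff.mp h)
    have hd : G.dist x z = n + 1 := le_antisymm hz h
    obtain ⟨p, hp⟩ := (hpre z x).exists_walk_length_eq_dist
    rw [SimpleGraph.dist_comm, hd] at hp
    cases p with
    | nil => simp at hp
    | @cons _ w _ hadj q =>
      right
      refine Set.mem_biUnion (x := w) ?_ hadj.symm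
      simp only [Set.mem_setOf_eq]
      have hq : G.dist w x ≤ q.length := SimpleGraph.dist_le q
      rw [SimpleGraph.dist_comm]
      simp only [SimpleGraph.Walk.length_cons] at hp
      omega

lemma edgeBound {X : Type*} (b : X → X → ℝ) (m : X → ℝ)
    (hb_nonneg : ∀ x y, 0 ≤ b x y) (hlf : ∀ x, (Function.support (b x)).Finite)
    (hm_pos : ∀ x, 0 < m x) (ψ : X → ℝ) (u v : X)
    (hΓ : gammaDensity b m ψ u ≤ 1) (huv : 0 < b u v) :
    |ψ u - ψ v| ≤ Real.sqrt (2 * m u / b u v) := by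
  have hsum : Summable (fun w => b u w * (ψ u - ψ w) ^ 2) := by
    refine mySummable (hlf u) ?_
    intro w hw
    simp only [Function.mem_support] at hw ⊢
    intro h0
    exact hw (by rw [h0]; ring)
  have h2m : (0 : ℝ) < 2 * m u := by have := hm_pos u; linarith
  have hT : ∑' w, b u w * (ψ u - ψ w) ^ 2 ≤ 2 * m u := by
    unfold gammaDensity at hΓ
    have := mul_le_mul_of_nonneg_left hΓ h2m.le
    rw [← mul_assoc, mul_inv_cancel₀ h2m.ne', one_mul, mul_one] at this
    exact this
  have hterm : b u v * (ψ u - ψ v) ^ 2 ≤ ∑' w, b u w * (ψ u - ψ w) ^ 2 := by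
    refine hsum.le_tsum v ?_
    intro w _
    have := hb_nonneg u w
    positivity
  have hsq : (ψ u - ψ v) ^ 2 ≤ 2 * m u / b u v := by
    rw [le_div_iff₀ huv]
    nlinarith [hterm, hT]
  calc |ψ u - ψ v| = Real.sqrt ((ψ u - ψ v) ^ 2) := (Real.sqrt_sq_eq_abs _).symm
  _ ≤ _ := Real.sqrt_le_sqrt hsq

theorem stmt14 {X : Type*} [Countable X]
    (b : X → X → ℝ) (m : X → ℝ)
    (hb_nonneg : ∀ x y, 0 ≤ b x y) (hb_symm : ∀ x y, b x y = b y x)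
    (hb_loop : ∀ x, b x x = 0)
    (hlf : ∀ x, (Function.support (b x)).Finite)
    (hm_pos : ∀ x, 0 < m x)
    (hconn : ∀ x y, Relation.ReflTransGen (fun u v => 0 < b u v) x y)
    (hDeg_bdd : ∃ D : ℝ, ∀ x, graphDeg b x / m x ≤ D)
    (S : ℝ) (hS : 0 < S) :
    ∀ x y : X, Real.sqrt 2 * rhoS b m S x y ≤ rhoE b m x y := by
  intro x y
  -- the combinatorial graph
  set G : SimpleGraph X :=
    { Adj := fun u v => 0 < b u v
      symm := ⟨fun u v h => by rw [hb_symm v u]; exact h⟩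
      loopless := ⟨fun u h => by rw [hb_loop u] at h; exact lt_irrefl 0 h⟩ } with hG
  have hGlf : ∀ v, (G.neighborSet v).Finite := by
    intro v
    refine Set.Finite.subset (hlf v) ?_
    intro w hw
    exact ne_of_gt hw
  have hpre : G.Preconnected := by
    intro u v
    rw [SimpleGraph.reachable_iff_reflTransGen]
    exact hconn u v
  have hne : Nonempty X := ⟨x⟩
  have hconnG : G.Connected := ⟨hpre⟩
  have hball := finiteBall G hGlf hpre x
  -- the set defining ρ_ℰ(x,y)
  set sE : Set ℝ := {r | ∃ ψ : X → ℝ, (Function.support ψ).Finite ∧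
      (∀ z, gammaDensity b m ψ z ≤ 1) ∧ r = |ψ x - ψ y|} with hsE
  -- sE is bounded above
  have hCex : ∀ v : X, ∃ C : ℝ, ∀ ψ : X → ℝ, (∀ z, gammaDensity b m ψ z ≤ 1) →
      |ψ x - ψ v| ≤ C := by
    intro v
    induction hconn x v with
    | refl => exact ⟨0, fun ψ _ => by simp⟩
    | @tail u v' hxu huv ih =>
      obtain ⟨C, hC⟩ := ih
      refine ⟨C + Real.sqrt (2 * m u / b u v'), fun ψ hψ => ?_⟩
      calc |ψ x - ψ v'| ≤ |ψ x - ψ u| + |ψ u - ψ v'| := abs_sub_le _ _ _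
      _ ≤ C + Real.sqrt (2 * m u / b u v') :=
        add_le_add (hC ψ hψ) (edgeBound b m hb_nonneg hlf hm_pos ψ u v' (hψ u) huv)
  have hsE_bdd : BddAbove sE := by
    obtain ⟨C, hC⟩ := hCex y
    exact ⟨C, fun r ⟨ψ, _, hψ, hr⟩ => hr ▸ hC ψ hψ⟩
  have hzeroΓ : ∀ z, gammaDensity b m (fun _ : X => (0:ℝ)) z ≤ 1 := by
    intro z
    unfold gammaDensity
    simp
  have hzero_mem : (0 : ℝ) ∈ sE :=
    ⟨fun _ => 0, by simp, hzeroΓ, by simp⟩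
  -- degree bound setup
  obtain ⟨D, hD⟩ := hDeg_bdd
  set D' : ℝ := max D 1 with hD'
  have hD'pos : (0 : ℝ) < D' := lt_of_lt_of_le one_pos (le_max_right _ _)
  have hdeg_le : ∀ z, graphDeg b z ≤ D' * m z := by
    intro z
    have h1 := (div_le_iff₀ (hm_pos z)).mp (hD z)
    calc graphDeg b z ≤ D * m z := h1
    _ ≤ D' * m z := mul_le_mul_of_nonneg_right (le_max_left _ _) (hm_pos z).le
  set ε : ℝ := (Real.sqrt D')⁻¹ with hε
  have hεpos : 0 < ε := inv_pos.mpr (Real.sqrt_pos.mpr hD'pos)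
  have hε2 : ∀ z, ε ^ 2 * graphDeg b z ≤ m z := by
    intro z
    have hsq : ε ^ 2 = D'⁻¹ := by
      rw [hε, inv_pow, Real.sq_sqrt hD'pos.le]
    rw [hsq, inv_mul_le_iff₀ hD'pos]
    exact hdeg_le z
  -- key estimate for a single intrinsic pseudo-metric
  have key : ∀ ρ : X → X → ℝ, IsPseudoMetric ρ → IsIntrinsic b m ρ →
      Real.sqrt 2 * ρ x y ≤ rhoE b m x y := by
    intro ρ hρ hint
    obtain ⟨hρ0, hρnn, hρsymm, hρtri⟩ := hρ
    have hxy_nonneg : 0 ≤ ρ x y := hρnn x y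
    have hstep : ∀ t : ℝ, t ∈ Set.Ioo (0:ℝ) 1 →
        t * (Real.sqrt 2 * ρ x y) ≤ rhoE b m x y := by
      rintro t ⟨ht0, ht1⟩
      set c : ℝ := Real.sqrt (1 - t ^ 2) with hc
      have ht2 : (0:ℝ) < 1 - t ^ 2 := by nlinarith
      have hc2 : c ^ 2 = 1 - t ^ 2 := Real.sq_sqrt ht2.le
      have hcpos : 0 < c := Real.sqrt_pos.mpr ht2
      obtain ⟨n, hn⟩ := exists_nat_ge (t * ρ x y / (c * ε))
      have hn' : t * ρ x y ≤ c * ε * n := by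
        rw [div_le_iff₀ (by positivity)] at hn
        linarith [hn]
      set A : X → ℝ := fun z => t * max (ρ x y - ρ x z) 0 with hA
      set B : X → ℝ := fun z => c * ε * max ((n : ℝ) - (G.dist x z : ℕ)) 0 with hB
      set ψ : X → ℝ := fun z => Real.sqrt 2 * min (A z) (B z) with hψdef
      have hA0 : ∀ z, 0 ≤ A z := fun z => mul_nonneg ht0.le (le_max_right _ _)
      have hB0 : ∀ z, 0 ≤ B z := fun z =>
        mul_nonneg (mul_nonneg hcpos.le hεpos.le) (le_max_right _ _)
      -- finite support
      have hsupp : Function.support ψ ⊆ {z | G.dist x z ≤ n} := by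
        intro z hz
        simp only [Function.mem_support] at hz
        by_contra hd
        simp only [Set.mem_setOf_eq, not_le] at hd
        apply hz
        have hBz : B z = 0 := by
          have h1 : ((n : ℝ) - (G.dist x z : ℕ)) ≤ 0 := by
            have : (n : ℝ) ≤ (G.dist x z : ℕ) := by exact_mod_cast hd.le
            linarith
          rw [hB]
          simp only [max_eq_right h1, mul_zero]
        rw [hψdef]
        simp only [hBz, min_eq_right (hA0 z), mul_zero]
      -- values at x and y
      have hψx : ψ x = Real.sqrt 2 * (t * ρ x y) := by
        have hAx : A x = t * ρ x y := by
          rw [hA]; simp only [hρ0 x, sub_zero, max_eq_left hxy_nonneg]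
        have hBx : B x = c * ε * n := by
          rw [hB]
          simp only [SimpleGraph.dist_self, Nat.cast_zero, sub_zero]
          rw [max_eq_left (by positivity : (0:ℝ) ≤ (n:ℝ))]
        rw [hψdef]
        simp only [hAx, hBx, min_eq_left hn']
      have hψy : ψ y = 0 := by
        have hAy : A y = 0 := by rw [hA]; simp
        rw [hψdef]
        simp only [hAy, min_eq_left (hB0 y), mul_zero]
      -- energy bound
      have hΓ : ∀ z, gammaDensity b m ψ z ≤ 1 := by
        intro z
        have hpt : ∀ w, b z w * (ψ z - ψ w) ^ 2 ≤
            2 * t ^ 2 * (b z w * ρ z w ^ 2) + (2 * (1 - t ^ 2) * ε ^ 2) * b z w := by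
          intro w
          rcases eq_or_lt_of_le (hb_nonneg z w) with h0 | hpos
          · rw [← h0]; simp
          · have hAlip : |A z - A w| ≤ t * ρ z w := by
              rw [hA]
              simp only
              rw [← mul_sub, abs_mul, abs_of_pos ht0]
              refine mul_le_mul_of_nonneg_left ?_ ht0.le
              calc |max (ρ x y - ρ x z) 0 - max (ρ x y - ρ x w) 0|
                  ≤ |(ρ x y - ρ x z) - (ρ x y - ρ x w)| := abs_max_sub_max_le_abs _ _ _
              _ = |ρ x w - ρ x z| := by ring_nf
              _ ≤ ρ z w := by
                  rw [abs_sub_le_iff]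
                  constructor
                  · have h1 := hρtri x z w
                    have h2 := hρsymm z w
                    linarith
                  · have h1 := hρtri x w z
                    have h2 := hρsymm w z
                    linarith
            have hdB : |((G.dist x z : ℕ) : ℝ) - ((G.dist x w : ℕ) : ℝ)| ≤ 1 := by
              have hadj : G.Adj z w := hpos
              have hzw1 : G.dist z w = 1 := SimpleGraph.dist_eq_one_iff_adj.mpr hadj
              have hwz1 : G.dist w z = 1 := SimpleGraph.dist_eq_one_iff_adj.mpr hadj.symm
              have t1 : G.dist x w ≤ G.dist x z + 1 := by
                rw [← hzw1]; exact hconnG.dist_triangle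
              have t2 : G.dist x z ≤ G.dist x w + 1 := by
                rw [← hwz1]; exact hconnG.dist_triangle
              rw [abs_sub_le_iff]
              constructor
              · have : ((G.dist x z : ℕ) : ℝ) ≤ ((G.dist x w : ℕ) : ℝ) + 1 := by
                  exact_mod_cast t2
                linarith
              · have : ((G.dist x w : ℕ) : ℝ) ≤ ((G.dist x z : ℕ) : ℝ) + 1 := by
                  exact_mod_cast t1
                linarith
            have hBlip : |B z - B w| ≤ c * ε := by
              rw [hB]
              simp only
              rw [← mul_sub, abs_mul, abs_of_pos (mul_pos hcpos hεpos)]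
              have h1 : |max ((n : ℝ) - (G.dist x z : ℕ)) 0 - max ((n : ℝ) - (G.dist x w : ℕ)) 0|
                  ≤ |((n : ℝ) - (G.dist x z : ℕ)) - ((n : ℝ) - (G.dist x w : ℕ))| :=
                abs_max_sub_max_le_abs _ _ _
              have h2 : |((n : ℝ) - (G.dist x z : ℕ)) - ((n : ℝ) - (G.dist x w : ℕ))|
                  = |((G.dist x w : ℕ) : ℝ) - ((G.dist x z : ℕ) : ℝ)| := by ring_nf
              have h3 := hdB
              rw [abs_sub_comm] at h3
              calc c * ε * |max ((n : ℝ) - (G.dist x z : ℕ)) 0 - max ((n : ℝ) - (G.dist x w : ℕ)) 0|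
                  ≤ c * ε * 1 := by
                    refine mul_le_mul_of_nonneg_left ?_ (mul_pos hcpos hεpos).le
                    rw [h2] at h1
                    exact le_trans h1 h3
              _ = c * ε := mul_one _
            have hψlip : |ψ z - ψ w| ≤ Real.sqrt 2 * max (t * ρ z w) (c * ε) := by
              rw [hψdef]
              simp only
              rw [← mul_sub, abs_mul, abs_of_nonneg (Real.sqrt_nonneg 2)]
              refine mul_le_mul_of_nonneg_left ?_ (Real.sqrt_nonneg 2)
              exact le_trans (abs_min_sub_min_le_max _ _ _ _) (max_le_max hAlip hBlip)
            have hsq : (ψ z - ψ w) ^ 2 ≤ 2 * t ^ 2 * ρ z w ^ 2 + 2 * (1 - t ^ 2) * ε ^ 2 := by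
              have h1 : (ψ z - ψ w) ^ 2 ≤ (Real.sqrt 2 * max (t * ρ z w) (c * ε)) ^ 2 := by
                rw [← sq_abs]
                exact pow_le_pow_left₀ (abs_nonneg _) hψlip 2
              have h2 : (Real.sqrt 2 * max (t * ρ z w) (c * ε)) ^ 2
                  = 2 * (max (t * ρ z w) (c * ε)) ^ 2 := by
                rw [mul_pow, Real.sq_sqrt (by norm_num : (0:ℝ) ≤ 2)]
              have h3 : (max (t * ρ z w) (c * ε)) ^ 2 ≤ (t * ρ z w) ^ 2 + (c * ε) ^ 2 := by
                rcases max_cases (t * ρ z w) (c * ε) with ⟨he, _⟩ | ⟨he, _⟩ <;>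
                  rw [he] <;> nlinarith [sq_nonneg (t * ρ z w), sq_nonneg (c * ε)]
              have h4 : (c * ε) ^ 2 = (1 - t ^ 2) * ε ^ 2 := by
                rw [mul_pow, hc2]
              nlinarith [h1, h2, h3, h4]
            calc b z w * (ψ z - ψ w) ^ 2
                ≤ b z w * (2 * t ^ 2 * ρ z w ^ 2 + 2 * (1 - t ^ 2) * ε ^ 2) :=
                  mul_le_mul_of_nonneg_left hsq hpos.le
            _ = 2 * t ^ 2 * (b z w * ρ z w ^ 2) + (2 * (1 - t ^ 2) * ε ^ 2) * b z w := by ring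
        have hs1 : Summable (fun w => b z w * (ψ z - ψ w) ^ 2) := by
          refine mySummable (hlf z) ?_
          intro w hw
          simp only [Function.mem_support] at hw ⊢
          intro h0; exact hw (by rw [h0]; ring)
        have hs2 : Summable (fun w => b z w * ρ z w ^ 2) := by
          refine mySummable (hlf z) ?_
          intro w hw
          simp only [Function.mem_support] at hw ⊢
          intro h0; exact hw (by rw [h0]; ring)
        have hs3 : Summable (b z) := mySummable (hlf z) subset_rfl
        have hsum_le : ∑' w, b z w * (ψ z - ψ w) ^ 2 ≤ 2 * m z := by
          have hrs : Summable (fun w => 2 * t ^ 2 * (b z w * ρ z w ^ 2)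
              + (2 * (1 - t ^ 2) * ε ^ 2) * b z w) :=
            (hs2.mul_left _).add (hs3.mul_left _)
          calc ∑' w, b z w * (ψ z - ψ w) ^ 2
              ≤ ∑' w, (2 * t ^ 2 * (b z w * ρ z w ^ 2) + (2 * (1 - t ^ 2) * ε ^ 2) * b z w) :=
                Summable.tsum_le_tsum hpt hs1 hrs
          _ = 2 * t ^ 2 * (∑' w, b z w * ρ z w ^ 2) + (2 * (1 - t ^ 2) * ε ^ 2) * ∑' w, b z w := by
                rw [Summable.tsum_add (hs2.mul_left _) (hs3.mul_left _), tsum_mul_left, tsum_mul_left]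
          _ ≤ 2 * t ^ 2 * m z + (2 * (1 - t ^ 2) * ε ^ 2) * graphDeg b z := by
                have hi := hint z
                have ht2' : (0:ℝ) ≤ 2 * t ^ 2 := by positivity
                have := mul_le_mul_of_nonneg_left hi ht2'
                simp only [graphDeg]
                linarith
          _ ≤ 2 * t ^ 2 * m z + 2 * (1 - t ^ 2) * m z := by
                have hεz := hε2 z
                nlinarith [ht2.le, hεz]
          _ = 2 * m z := by ring
        unfold gammaDensity
        have h2m : (0:ℝ) < 2 * m z := by have := hm_pos z; linarith
        calc (2 * m z)⁻¹ * ∑' w, b z w * (ψ z - ψ w) ^ 2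
            ≤ (2 * m z)⁻¹ * (2 * m z) :=
              mul_le_mul_of_nonneg_left hsum_le (inv_nonneg.mpr h2m.le)
        _ = 1 := inv_mul_cancel₀ h2m.ne'
      -- membership and conclusion
      have hmem : t * (Real.sqrt 2 * ρ x y) ∈ sE := by
        refine ⟨ψ, Set.Finite.subset (hball n) hsupp, hΓ, ?_⟩
        rw [hψx, hψy, sub_zero, abs_of_nonneg (by positivity)]
        ring
      exact le_csSup hsE_bdd hmem
    -- limit t → 1⁻
    have hlim : Filter.Tendsto (fun t : ℝ => t * (Real.sqrt 2 * ρ x y))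
        (nhdsWithin 1 (Set.Iio 1)) (nhds (Real.sqrt 2 * ρ x y)) := by
      have h := (continuous_mul_right (Real.sqrt 2 * ρ x y)).tendsto 1
      rw [one_mul] at h
      exact h.mono_left nhdsWithin_le_nhds
    refine le_of_tendsto hlim ?_
    filter_upwards [Ioo_mem_nhdsLT
      (by norm_num : (0:ℝ) < 1)] with t ht
    exact hstep t ht
  -- conclusion
  have hsqrt2 : (0:ℝ) < Real.sqrt 2 := Real.sqrt_pos.mpr (by norm_num)
  have hzero_metric : (0:ℝ) ∈ {r | ∃ ρ : X → X → ℝ, IsPseudoMetric ρ ∧ IsIntrinsic b m ρ ∧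
      JumpLE b ρ S ∧ r = ρ x y} := by
    refine ⟨fun _ _ => 0, ⟨fun _ => rfl, fun _ _ => le_refl 0, fun _ _ => rfl,
      fun _ _ _ => by norm_num⟩, ?_, fun _ _ _ => hS.le, rfl⟩
    intro z
    simp only [ne_eq, OfNat.ofNat_ne_zero, not_false_eq_true, zero_pow, mul_zero, tsum_zero]
    exact (hm_pos z).le
  have hρS : rhoS b m S x y ≤ rhoE b m x y / Real.sqrt 2 := by
    refine csSup_le ⟨0, hzero_metric⟩ ?_
    rintro r ⟨ρ, hpm, hint, _, rfl⟩
    rw [le_div_iff₀ hsqrt2]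
    have := key ρ hpm hint
    linarith [this, mul_comm (ρ x y) (Real.sqrt 2)]
  calc Real.sqrt 2 * rhoS b m S x y
      ≤ Real.sqrt 2 * (rhoE b m x y / Real.sqrt 2) :=
        mul_le_mul_of_nonneg_left hρS hsqrt2.le
  _ = rhoE b m x y := by field_simp

end
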